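/- Let A be an n×n matrix over a totally ordered commutative group. If ℓ is a canon for A, define μ_i := (max_k ℓ_k) − ℓ_i and ν_j := max_k (a_{k,j} − μ_k). Then (μ, ν) is a minimal cover for A. -/

import Mathlib

/-- The maximum of a function on `Fin n`, `n ≠ 0`. -/
def maxF {n : ℕ} [NeZero n] {M : Type*} [LinearOrder M] (f : Fin n → M) : M :=
  Finset.univ.sup' ⟨⟨0, Nat.pos_of_ne_zero (NeZero.ne n)⟩, Finset.mem_univ _⟩ f

/-- `ℓ` is a canon for the `n × n` matrix `A`: `ℓ` is nonnegative and `A + ℓ`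
possesses `n` transversal column-maxima. -/
def IsCanon {n : ℕ} {M : Type*} [AddCommGroup M] [LinearOrder M] [IsOrderedAddMonoid M]
    (A : Fin n → Fin n → M) (ℓ : Fin n → M) : Prop :=
  (∀ i, 0 ≤ ℓ i) ∧
    ∃ σ : Equiv.Perm (Fin n), ∀ i i', A i' (σ i) + ℓ i' ≤ A i (σ i) + ℓ i

/-- `(μ, ν)` is a cover of `A`. -/
def IsCover {n : ℕ} {M : Type*} [AddCommGroup M] [LinearOrder M] [IsOrderedAddMonoid M]
    (A : Fin n → Fin n → M) (μ ν : Fin n → M) : Prop :=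
  ∀ i j, A i j ≤ μ i + ν j

/-- A minimal cover minimizes `∑ i, (μ i + ν i)`. -/
def IsMinimalCover {n : ℕ} {M : Type*} [AddCommGroup M] [LinearOrder M] [IsOrderedAddMonoid M]
    (A : Fin n → Fin n → M) (μ ν : Fin n → M) : Prop :=
  IsCover A μ ν ∧
    ∀ μ' ν', IsCover A μ' ν' → ∑ i, (μ i + ν i) ≤ ∑ i, (μ' i + ν' i)

/-- The cover associated to a canon `ℓ`, namely
`μ_i := (max_k ℓ_k) − ℓ_i` and `ν_j := max_k (a_{k,j} − μ_k)`,
is a minimal cover for `A`. -/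
theorem cover_of_canon_isMinimal {n : ℕ} [NeZero n] {M : Type*}
    [AddCommGroup M] [LinearOrder M] [IsOrderedAddMonoid M] (A : Fin n → Fin n → M) (ℓ : Fin n → M)
    (h : IsCanon A ℓ) :
    IsMinimalCover A (fun i => maxF ℓ - ℓ i)
      (fun j => maxF fun k => A k j - (maxF ℓ - ℓ k)) := by
  obtain ⟨hℓ, σ, hσ⟩ := h
  have hcov : IsCover A (fun i => maxF ℓ - ℓ i)
      (fun j => maxF fun k => A k j - (maxF ℓ - ℓ k)) := by
    intro i j
    have h1 : A i j - (maxF ℓ - ℓ i) ≤ maxF fun k => A k j - (maxF ℓ - ℓ k) :=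
      Finset.le_sup' (fun k => A k j - (maxF ℓ - ℓ k)) (Finset.mem_univ i)
    exact sub_le_iff_le_add'.mp h1
  refine ⟨hcov, fun μ' ν' hc => ?_⟩
  have key : ∀ i, ((maxF ℓ - ℓ i) + maxF fun k => A k (σ i) - (maxF ℓ - ℓ k))
      = A i (σ i) := by
    intro i
    have h1 : (maxF fun k => A k (σ i) - (maxF ℓ - ℓ k))
        = A i (σ i) - (maxF ℓ - ℓ i) := by
      apply le_antisymm
      · apply Finset.sup'_le
        intro k _
        have h2 := hσ i k
        have h3 : A k (σ i) + ℓ k - maxF ℓ ≤ A i (σ i) + ℓ i - maxF ℓ :=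
          sub_le_sub_right h2 _
        calc A k (σ i) - (maxF ℓ - ℓ k) = A k (σ i) + ℓ k - maxF ℓ := by abel
          _ ≤ A i (σ i) + ℓ i - maxF ℓ := h3
          _ = A i (σ i) - (maxF ℓ - ℓ i) := by abel
      · exact Finset.le_sup' (fun k => A k (σ i) - (maxF ℓ - ℓ k)) (Finset.mem_univ i)
    rw [h1]; abel
  have hsum : ∀ (g : Fin n → M), ∑ i, g (σ i) = ∑ i, g i :=
    fun g => Equiv.sum_comp σ g
  calc ∑ i, ((maxF ℓ - ℓ i) + maxF fun k => A k i - (maxF ℓ - ℓ k))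
      = (∑ i, (maxF ℓ - ℓ i)) + ∑ i, maxF fun k => A k i - (maxF ℓ - ℓ k) :=
        Finset.sum_add_distrib
    _ = (∑ i, (maxF ℓ - ℓ i)) + ∑ i, maxF fun k => A k (σ i) - (maxF ℓ - ℓ k) := by
        rw [hsum fun j => maxF fun k => A k j - (maxF ℓ - ℓ k)]
    _ = ∑ i, ((maxF ℓ - ℓ i) + maxF fun k => A k (σ i) - (maxF ℓ - ℓ k)) :=
        Finset.sum_add_distrib.symm
    _ = ∑ i, A i (σ i) := Finset.sum_congr rfl fun i _ => key i
    _ ≤ ∑ i, (μ' i + ν' (σ i)) := Finset.sum_le_sum fun i _ => hc i (σ i)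
    _ = (∑ i, μ' i) + ∑ i, ν' (σ i) := Finset.sum_add_distrib
    _ = (∑ i, μ' i) + ∑ i, ν' i := by rw [hsum ν']
    _ = ∑ i, (μ' i + ν' i) := Finset.sum_add_distrib.symm
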